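/- Let (xᵢ, yᵢ) for i = 0, …, r be points in the first quadrant with x₀ < x₁ < ⋯ < xᵣ and y₀ > y₁ > ⋯ > yᵣ (vertices of a Newton polygon), and for 1 ≤ i ≤ r set aᵢ = y_{i-1} - yᵢ > 0, bᵢ = xᵢ - x_{i-1} > 0, τᵢ = bᵢ/aᵢ, and w(i) = (1 + τᵢ)/(xᵢ + yᵢ·τᵢ). Then w(i) - w(i+1) = (yᵢ - xᵢ)(τ_{i+1} - τᵢ)/((xᵢ + yᵢ·τᵢ)(xᵢ + yᵢ·τ_{i+1})) for 1 ≤ i ≤ r - 1. Moreover, assuming the points all have positive coordinates where needed (xᵢ + yᵢτᵢ > 0), the maximum of w(i) over 1 ≤ i ≤ r equals max(w(1), w(r)). -/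

import Mathlib

theorem stmt_2 (r : ℕ) (hr : 1 ≤ r) (x y a b τ w : ℕ → ℝ)
    (hx : ∀ i, i < r → x i < x (i+1))
    (hy : ∀ i, i < r → y (i+1) < y i)
    (hxy0 : ∀ i, i ≤ r → 0 ≤ x i ∧ 0 ≤ y i)
    (ha : ∀ i, 1 ≤ i → i ≤ r → a i = y (i-1) - y i)
    (hb : ∀ i, 1 ≤ i → i ≤ r → b i = x i - x (i-1))
    (hτ : ∀ i, 1 ≤ i → i ≤ r → τ i = b i / a i)
    (hτmono : ∀ i, 1 ≤ i → i < r → τ i < τ (i+1))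
    (hw : ∀ i, 1 ≤ i → i ≤ r → w i = (1 + τ i) / (x i + y i * τ i))
    (hden : ∀ i, 1 ≤ i → i ≤ r → 0 < x i + y i * τ i) :
    (∀ i, 1 ≤ i → i ≤ r - 1 →
      w i - w (i+1) = (y i - x i) * (τ (i+1) - τ i) /
        ((x i + y i * τ i) * (x i + y i * τ (i+1)))) ∧
    (Finset.Icc 1 r).sup' (Finset.nonempty_Icc.mpr hr) w = max (w 1) (w r) := by
  have hxmono : ∀ j k, j ≤ k → k ≤ r → x j ≤ x k := by
    intro j k hjk hkr
    induction k, hjk using Nat.le_induction with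
    | base => exact le_rfl
    | succ k hk ih => exact le_trans (ih (by omega)) (le_of_lt (hx k (by omega)))
  have hymono : ∀ j k, j ≤ k → k ≤ r → y k ≤ y j := by
    intro j k hjk hkr
    induction k, hjk using Nat.le_induction with
    | base => exact le_rfl
    | succ k hk ih => exact le_trans (le_of_lt (hy k (by omega))) (ih (by omega))
  have key : ∀ i, 1 ≤ i → i + 1 ≤ r →
      x (i+1) + y (i+1) * τ (i+1) = x i + y i * τ (i+1) := by
    intro i h1 h2
    have ha' := ha (i+1) (by omega) h2
    have hb' := hb (i+1) (by omega) h2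
    have hτ' := hτ (i+1) (by omega) h2
    simp only [Nat.add_sub_cancel] at ha' hb'
    have hapos : 0 < a (i+1) := by rw [ha']; linarith [hy i (by omega)]
    have hne : y i - y (i+1) ≠ 0 := ne_of_gt (by linarith [hy i (by omega)])
    rw [hτ', ha', hb']
    field_simp [hne]
    ring
  have hdiff : ∀ i, 1 ≤ i → i + 1 ≤ r →
      w i - w (i+1) = (y i - x i) * (τ (i+1) - τ i) /
        ((x i + y i * τ i) * (x i + y i * τ (i+1))) := by
    intro i h1 h2
    have d1 := hden i h1 (by omega)
    have d2 : 0 < x i + y i * τ (i+1) := by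
      rw [← key i h1 h2]; exact hden (i+1) (by omega) h2
    rw [hw i h1 (by omega), hw (i+1) (by omega) h2, key i h1 h2]
    rw [div_sub_div _ _ d1.ne' d2.ne']
    ring
  have hsign : ∀ j, 1 ≤ j → j + 1 ≤ r →
      (0 ≤ y j - x j → w (j+1) ≤ w j) ∧ (y j - x j ≤ 0 → w j ≤ w (j+1)) := by
    intro j h1 h2
    have d1 := hden j h1 (by omega)
    have d2 : 0 < x j + y j * τ (j+1) := by
      rw [← key j h1 h2]; exact hden (j+1) (by omega) h2
    have hτd : 0 < τ (j+1) - τ j := by linarith [hτmono j h1 (by omega)]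
    have hD : 0 < (x j + y j * τ j) * (x j + y j * τ (j+1)) := mul_pos d1 d2
    have hd := hdiff j h1 h2
    constructor
    · intro hyx
      have : 0 ≤ w j - w (j+1) := by
        rw [hd]; positivity
      linarith
    · intro hyx
      have : w j - w (j+1) ≤ 0 := by
        rw [hd]
        apply div_nonpos_of_nonpos_of_nonneg
        · nlinarith
        · linarith
      linarith
  have chainDec : ∀ k, 1 ≤ k → ∀ i, k ≤ i → i ≤ r → 0 ≤ y i - x i → w i ≤ w k := by
    intro k hk i hki
    induction i, hki using Nat.le_induction with
    | base => exact fun _ _ => le_rfl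
    | succ i hik ih =>
      intro hir hcond
      have hcond' : 0 ≤ y i - x i := by
        have := hy i (by omega); have := hx i (by omega); linarith
      exact le_trans ((hsign i (by omega) hir).1 hcond') (ih (by omega) hcond')
  have chainInc : ∀ i, 1 ≤ i → i ≤ r → y i - x i ≤ 0 → w i ≤ w r := by
    intro i h1 hir hcond
    have : ∀ k, i ≤ k → k ≤ r → w i ≤ w k := by
      intro k hik
      induction k, hik using Nat.le_induction with
      | base => exact fun _ => le_rfl
      | succ k hk ih =>
        intro hkr
        have hcond' : y k - x k ≤ 0 := by
          have := hymono i k hk (by omega); have := hxmono i k hk (by omega); linarith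
        exact le_trans (ih (by omega)) ((hsign k (by omega) hkr).2 hcond')
    exact this r hir le_rfl
  constructor
  · intro i h1 h2
    exact hdiff i h1 (by omega)
  · apply le_antisymm
    · apply Finset.sup'_le
      intro i hi
      simp only [Finset.mem_Icc] at hi
      rcases le_or_gt 0 (y i - x i) with hc | hc
      · exact le_max_of_le_left (chainDec 1 le_rfl i hi.1 hi.2 hc)
      · exact le_max_of_le_right (chainInc i hi.1 hi.2 (le_of_lt hc))
    · apply max_le
      · exact Finset.le_sup' w (by simp [Finset.mem_Icc]; omega)
      · exact Finset.le_sup' w (by simp [Finset.mem_Icc]; omega)
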